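/- Let b ≥ 1 be an integer, let a_1,…,a_b be real numbers each at least 1, and let p(s) ∈ ℝ[s] be a non-zero polynomial with deg p(s) < b. Write the formal power series expansion p(s)/Π_{j=1}^b (1 − a_j s) = Σ_{n≥0} r_n s^n in ℝ[[s]] (i.e., Π_{j=1}^b (1 − a_j s)·Σ r_n s^n = p(s), which determines the r_n uniquely since each 1 − a_j s has constant term 1). Then r_n ≠ 0 for all sufficiently large n. -/

import Mathlib

open PowerSeries

private def DD (a : ℝ) (r : ℕ → ℝ) : ℕ → ℝ
  | 0 => r 0
  | (n+1) => r (n+1) - a * r n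

private lemma one_sub_mul_mk (a : ℝ) (r : ℕ → ℝ) :
    ((1 : ℝ⟦X⟧) - PowerSeries.C a * PowerSeries.X) * PowerSeries.mk r
      = PowerSeries.mk (DD a r) := by
  ext n
  cases n with
  | zero => simp [DD]
  | succ k => simp [DD, sub_mul, mul_assoc, PowerSeries.coeff_succ_X_mul]

private lemma pos_tail (a ε : ℝ) (ha : 1 ≤ a) (hε : 0 < ε) (r : ℕ → ℝ) (N : ℕ)
    (h : ∀ n, N ≤ n → ε ≤ r (n+1) - a * r n) :
    ∃ N' δ, 0 < δ ∧ ((∀ n, N' ≤ n → δ ≤ r n) ∨ (∀ n, N' ≤ n → r n ≤ -δ)) := by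
  have ha0 : (0:ℝ) < a := lt_of_lt_of_le one_pos ha
  by_cases hc : ∀ n, N ≤ n → r n < 0
  · refine ⟨N, ε / a, div_pos hε ha0, Or.inr fun n hn => ?_⟩
    have h1 := h n hn
    have h2 := hc (n+1) (le_trans hn (Nat.le_succ n))
    have h3 : r n * a ≤ -ε := by nlinarith
    have : r n ≤ (-ε) / a := (le_div_iff₀ ha0).mpr h3
    linarith [neg_div a ε]
  · push_neg at hc
    obtain ⟨M, hM, hrM⟩ := hc
    refine ⟨M+1, ε, hε, Or.inl ?_⟩
    have key : ∀ k, ε ≤ r (M+1+k) := by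
      intro k
      induction k with
      | zero =>
          have h1 := h M hM
          have h2 : (0:ℝ) ≤ a * r M := mul_nonneg (le_of_lt ha0) hrM
          have h3 : M + 1 + 0 = M + 1 := rfl
          rw [h3]; linarith
      | succ k ih =>
          have h1 := h (M+1+k) (by omega)
          have h2 : r (M+1+k) ≤ a * r (M+1+k) := le_mul_of_one_le_left (by linarith) ha
          show ε ≤ r (M+1+k+1)
          linarith
    intro n hn
    have hn' : n = M+1+(n-(M+1)) := by omega
    rw [hn']; exact key _

private lemma geom_tail (a : ℝ) (ha : 1 ≤ a) (r : ℕ → ℝ) (m : ℕ)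
    (h : ∀ n, m ≤ n → r (n+1) = a * r n) :
    (∃ m', ∀ n, m' ≤ n → r n = 0) ∨
      ∃ N δ, 0 < δ ∧ ((∀ n, N ≤ n → δ ≤ r n) ∨ (∀ n, N ≤ n → r n ≤ -δ)) := by
  rcases lt_trichotomy (r m) 0 with hm | hm | hm
  · right
    refine ⟨m, -(r m), by linarith, Or.inr ?_⟩
    have key : ∀ k, r (m+k) ≤ r m := by
      intro k
      induction k with
      | zero => exact le_of_eq rfl
      | succ k ih =>
          show r ((m+k)+1) ≤ r m
          rw [h (m+k) (by omega)]
          nlinarith [mul_nonneg (sub_nonneg.mpr ha)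
            (neg_nonneg.mpr (le_of_lt (lt_of_le_of_lt ih hm)))]
    intro n hn
    have hn' : n = m+(n-m) := by omega
    rw [hn']; linarith [key (n-m)]
  · left
    refine ⟨m, ?_⟩
    have key : ∀ k, r (m+k) = 0 := by
      intro k
      induction k with
      | zero => exact hm
      | succ k ih => show r ((m+k)+1) = 0; rw [h (m+k) (by omega), ih, mul_zero]
    intro n hn
    have hn' : n = m+(n-m) := by omega
    rw [hn']; exact key _
  · right
    refine ⟨m, r m, hm, Or.inl ?_⟩
    have key : ∀ k, r m ≤ r (m+k) := by
      intro k
      induction k with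
      | zero => exact le_of_eq rfl
      | succ k ih =>
          show r m ≤ r ((m+k)+1)
          rw [h (m+k) (by omega)]
          nlinarith [mul_nonneg (sub_nonneg.mpr ha) (le_trans (le_of_lt hm) ih)]
    intro n hn
    have hn' : n = m+(n-m) := by omega
    rw [hn']; linarith [key (n-m)]

private lemma aux_main : ∀ (b : ℕ) (a : Fin b → ℝ), (∀ j, 1 ≤ a j) → ∀ (r g : ℕ → ℝ),
    (∃ m, ∀ n, m ≤ n → g n = 0) →
    (∏ j, (1 - PowerSeries.C (a j) * PowerSeries.X)) * PowerSeries.mk r = PowerSeries.mk g →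
    (∃ m, ∀ n, m ≤ n → r n = 0) ∨
      ∃ N δ, 0 < δ ∧ ((∀ n, N ≤ n → δ ≤ r n) ∨ (∀ n, N ≤ n → r n ≤ -δ)) := by
  intro b
  induction b with
  | zero =>
      intro a ha r g hg h
      left
      obtain ⟨m, hm⟩ := hg
      refine ⟨m, fun n hn => ?_⟩
      have h2 : PowerSeries.mk r = PowerSeries.mk g := by simpa using h
      have h3 := congrArg (PowerSeries.coeff n) h2
      simp only [PowerSeries.coeff_mk] at h3
      rw [h3]; exact hm n hn
  | succ b ih =>
      intro a ha r g hg h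
      have hprod : (∏ j : Fin (b+1), ((1:ℝ⟦X⟧) - PowerSeries.C (a j) * PowerSeries.X))
          = (∏ j : Fin b, (1 - PowerSeries.C (a j.castSucc) * PowerSeries.X))
              * (1 - PowerSeries.C (a (Fin.last b)) * PowerSeries.X) :=
        Fin.prod_univ_castSucc _
      rw [hprod, mul_assoc, one_sub_mul_mk] at h
      rcases ih (fun j => a j.castSucc) (fun j => ha _) (DD (a (Fin.last b)) r) g hg h with h1 | h2
      · obtain ⟨m, hm⟩ := h1
        refine geom_tail (a (Fin.last b)) (ha _) r m fun n hn => ?_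
        have := hm (n+1) (by omega)
        simp only [DD] at this
        linarith
      · right
        obtain ⟨N, ε, hε, hcase | hcase⟩ := h2
        · refine pos_tail (a (Fin.last b)) ε (ha _) hε r N fun n hn => ?_
          have := hcase (n+1) (by omega)
          simpa [DD] using this
        · obtain ⟨N', δ, hδ, hc | hc⟩ :=
            pos_tail (a (Fin.last b)) ε (ha _) hε (fun n => -r n) N (fun n hn => by
              have := hcase (n+1) (by omega)
              simp only [DD] at this
              linarith)
          · refine ⟨N', δ, hδ, Or.inr fun n hn => ?_⟩
            have := hc n hn; linarith
          · refine ⟨N', δ, hδ, Or.inl fun n hn => ?_⟩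
            have := hc n hn; linarith



/-- **Eventually nonzero coefficients.**
Let `b ≥ 1`, let `a_1, …, a_b` be real numbers each at least `1`, and let
`p ∈ ℝ[s]` be a nonzero polynomial of degree `< b`.  If
`p(s) / ∏_{j=1}^b (1 - a_j s) = Σ_{n ≥ 0} r_n s^n` as formal power series
(equivalently `∏_j (1 - a_j s) · Σ r_n s^n = p(s)`, which determines the `r_n`
uniquely since each factor has constant term `1`), then `r_n ≠ 0` for all
sufficiently large `n`. -/
theorem eventually_nonzero_coeff_of_inv_prod_one_sub_smul
    (b : ℕ) (hb : 1 ≤ b) (a : Fin b → ℝ) (ha : ∀ j, 1 ≤ a j)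
    (p : Polynomial ℝ) (hp : p ≠ 0) (hdeg : p.natDegree < b)
    (r : ℕ → ℝ)
    (hr : (∏ j, (1 - PowerSeries.C (a j) * PowerSeries.X)) * PowerSeries.mk r
        = (Polynomial.coeToPowerSeries.ringHom p)) :
    ∃ N : ℕ, ∀ n : ℕ, N ≤ n → r n ≠ 0 := by
  have hg : ∃ m, ∀ n, m ≤ n → p.coeff n = 0 :=
    ⟨p.natDegree + 1, fun n hn => p.coeff_eq_zero_of_natDegree_lt (by omega)⟩
  have hpg : Polynomial.coeToPowerSeries.ringHom p = PowerSeries.mk (fun n => p.coeff n) := by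
    ext n
    simp [Polynomial.coeff_coe]
  rcases aux_main b a ha r (fun n => p.coeff n) hg (by rw [hr, hpg]) with h1 | h2
  · exfalso
    obtain ⟨m, hm⟩ := h1
    set Q : Polynomial ℝ := ∑ n ∈ Finset.range m, Polynomial.C (r n) * Polynomial.X ^ n with hQdef
    have hQ : PowerSeries.mk r = Polynomial.coeToPowerSeries.ringHom Q := by
      ext k
      simp only [hQdef, Polynomial.coeToPowerSeries.ringHom_apply, Polynomial.coeff_coe,
        PowerSeries.coeff_mk, Polynomial.finset_sum_coeff, Polynomial.coeff_C_mul,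
        Polynomial.coeff_X_pow, mul_ite, mul_one, mul_zero]
      rw [Finset.sum_ite_eq (Finset.range m) k r]
      by_cases hk : k < m
      · simp [hk]
      · simp [hk, hm k (by omega)]
    set P : Polynomial ℝ := ∏ j, ((1:Polynomial ℝ) - Polynomial.C (a j) * Polynomial.X)
      with hPdef
    have hP : Polynomial.coeToPowerSeries.ringHom P
        = ∏ j, ((1:ℝ⟦X⟧) - PowerSeries.C (a j) * PowerSeries.X) := by
      rw [hPdef, map_prod]
      refine Finset.prod_congr rfl fun j _ => ?_
      simp
    have hPQ : P * Q = p := by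
      have : Polynomial.coeToPowerSeries.ringHom (P * Q)
          = Polynomial.coeToPowerSeries.ringHom p := by
        rw [map_mul, hP, ← hQ, hr]
      simpa only [Polynomial.coeToPowerSeries.ringHom_apply, Polynomial.coe_inj] using this
    have hne : ∀ j : Fin b, ((1:Polynomial ℝ) - Polynomial.C (a j) * Polynomial.X) ≠ 0 := by
      intro j h
      have := congrArg (fun q => Polynomial.coeff q 0) h
      simp at this
    have hdegP : P.natDegree = b := by
      rw [hPdef, Polynomial.natDegree_prod _ _ (fun j _ => hne j)]
      have hd : ∀ j : Fin b,
          ((1:Polynomial ℝ) - Polynomial.C (a j) * Polynomial.X).natDegree = 1 := by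
        intro j
        have ha0 : a j ≠ 0 := by have := ha j; intro h; rw [h] at this; linarith
        have heq : ((1:Polynomial ℝ) - Polynomial.C (a j) * Polynomial.X)
            = Polynomial.C (-(a j)) * Polynomial.X + Polynomial.C 1 := by
          ring_nf; simp [Polynomial.C_neg]; ring
        rw [heq, Polynomial.natDegree_linear (by simpa using ha0)]
      simp [hd]
    have hQ0 : Q ≠ 0 := by
      intro h0
      exact hp (by rw [← hPQ, h0, mul_zero])
    have hP0 : P ≠ 0 := by
      rw [hPdef]
      exact Finset.prod_ne_zero_iff.mpr fun j _ => hne j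
    have hdm := Polynomial.natDegree_mul hP0 hQ0
    rw [hPQ, hdegP] at hdm
    omega
  · obtain ⟨N, δ, hδ, hc | hc⟩ := h2
    · exact ⟨N, fun n hn h0 => by have := hc n hn; rw [h0] at this; linarith⟩
    · exact ⟨N, fun n hn h0 => by have := hc n hn; rw [h0] at this; linarith⟩
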